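/- arXiv:1701.08480 — 4 statements merged into one kernel-verified Lean document; each statement's English description precedes it below -/
import Mathlib

section
/- If P is a wide rooted branching subposet of B_n with at most n−1 leaves, then there exists a singleton {q} such that the sum over all leaves l of P above {q} of 1/|l| is strictly less than 1. -/
def IsMaximalIn {n : ℕ} (P : Finset (Finset (Fin n))) (A : Finset (Fin n)) : Prop :=
  A ∈ P ∧ ∀ B ∈ P, A ⊆ B → B = A

def Branching {n : ℕ} (P : Finset (Finset (Fin n))) : Prop :=
  ∀ A ∈ P, ¬ IsMaximalIn P A →
    2 ≤ (P.filter (fun B => A ⊂ B ∧ B.card = A.card + 1)).card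

open Finset in
/-- If a wide rooted branching subposet of `B_n` has at most `n-1` leaves, then there is a
singleton `{q}` for which the sum of `1/|l|` over leaves `l` above `{q}` is less than `1`. -/
theorem stmt3 {n : ℕ} (hn : 1 ≤ n) (P : Finset (Finset (Fin n)))
    (hroot : (∅ : Finset (Fin n)) ∈ P)
    (hwide : ∀ i : Fin n, {i} ∈ P)
    (hbr : Branching P)
    (hleaves : (P.filter (fun A => ∀ B ∈ P, A ⊆ B → B = A)).card ≤ n - 1) :
    ∃ q : Fin n,
      ∑ l ∈ (P.filter (fun A => ∀ B ∈ P, A ⊆ B → B = A)).filter (fun l => {q} ⊆ l),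
        (1 / (l.card : ℚ)) < 1 := by
  classical
  by_contra h
  push_neg at h
  set L := P.filter (fun A => ∀ B ∈ P, A ⊆ B → B = A) with hL
  have hne : ∀ l ∈ L, (l.card : ℚ) ≠ 0 := by
    intro l hl
    simp only [hL, mem_filter] at hl
    have : l ≠ ∅ := by
      intro hc
      have i : Fin n := ⟨0, hn⟩
      have := hl.2 {i} (hwide i) (by simp [hc])
      simp [hc] at this
    simpa [card_eq_zero] using this
  have key : ∑ q : Fin n, ∑ l ∈ L.filter (fun l => {q} ⊆ l), (1 / (l.card : ℚ))
      = (L.card : ℚ) := by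
    have h1 : ∀ q : Fin n, ∑ l ∈ L.filter (fun l => {q} ⊆ l), (1 / (l.card : ℚ))
        = ∑ l ∈ L, if q ∈ l then (1 / (l.card : ℚ)) else 0 := by
      intro q
      rw [sum_filter]
      exact sum_congr rfl (fun l _ => by simp [singleton_subset_iff])
    simp_rw [h1]
    rw [Finset.sum_comm]
    have h2 : ∀ l ∈ L, (∑ q : Fin n, if q ∈ l then (1 / (l.card : ℚ)) else 0) = 1 := by
      intro l hl
      rw [Finset.sum_ite_mem, univ_inter, sum_const, nsmul_eq_mul]
      field_simp [hne l hl]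
    rw [sum_congr rfl h2, sum_const, nsmul_eq_mul, mul_one]
  have hlow : (n : ℚ) ≤ ∑ q : Fin n, ∑ l ∈ L.filter (fun l => {q} ⊆ l), (1 / (l.card : ℚ)) := by
    calc (n : ℚ) = ∑ _q : Fin n, (1 : ℚ) := by simp
    _ ≤ _ := Finset.sum_le_sum (fun q _ => h q)
  rw [key] at hlow
  have : L.card < n := lt_of_le_of_lt hleaves (Nat.sub_lt hn one_pos)
  have : (L.card : ℚ) < n := by exact_mod_cast this
  linarith
end

section
/- If P is a rooted branching subposet of B_n whose set of leaves is exactly the set P^q of elements above the singleton {q} restricted to its leaves, then for the subposet P^q = {y ∈ P : {q} ⊆ y}, the sum over leaves l of P^q of 1/|l| is at least 1. -/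
open Finset

namespace Stmt4Aux

variable {n : ℕ}

theorem sort_uniq {k : ℕ} {F : Fin k → Fin n} (hF : Function.Injective F)
    {ρ₁ ρ₂ : Equiv.Perm (Fin k)} (h₁ : StrictMono (F ∘ ⇑ρ₁)) (h₂ : StrictMono (F ∘ ⇑ρ₂)) :
    ρ₁ = ρ₂ := by
  have hr : Set.range (F ∘ ⇑ρ₁) = Set.range (F ∘ ⇑ρ₂) := by
    rw [Function.Surjective.range_comp ρ₁.surjective F,
      Function.Surjective.range_comp ρ₂.surjective F]
  have heq : F ∘ ⇑ρ₁ = F ∘ ⇑ρ₂ := by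
    have := (h₁.range_inj h₂).1 hr
    exact this
  exact Equiv.ext fun i => hF (congrFun heq i)

theorem count_strictMono {k : ℕ} (W : Fin k → Fin n) (hW : Function.Injective W) :
    ((univ : Finset (Equiv.Perm (Fin n))).filter
      (fun σ : Equiv.Perm (Fin n) => StrictMono (⇑σ ∘ W))).card * (Nat.factorial k) = Nat.factorial n := by
  classical
  set Wemb : Fin k ↪ Fin n := ⟨W, hW⟩ with hWemb
  let Ψ : {σ : Equiv.Perm (Fin n) // StrictMono (⇑σ ∘ W)} × Equiv.Perm (Fin k) →
      Equiv.Perm (Fin n) := fun p => (Equiv.Perm.viaFintypeEmbedding p.2 Wemb).trans p.1.val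
  have happ : ∀ (σ₀ : {σ : Equiv.Perm (Fin n) // StrictMono (⇑σ ∘ W)})
      (ρ : Equiv.Perm (Fin k)) (a : Fin k), Ψ (σ₀, ρ) (W a) = σ₀.val (W (ρ a)) := by
    intro σ₀ ρ a
    have h2 := Equiv.Perm.viaFintypeEmbedding_apply_image ρ Wemb a
    simp only [Ψ, Equiv.trans_apply]
    rw [show W a = Wemb a from rfl, h2]
    rfl
  have hnot : ∀ (σ₀ : {σ : Equiv.Perm (Fin n) // StrictMono (⇑σ ∘ W)})
      (ρ : Equiv.Perm (Fin k)) (x : Fin n), x ∉ Set.range W → Ψ (σ₀, ρ) x = σ₀.val x := by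
    intro σ₀ ρ x hx
    have hx' : x ∉ Set.range Wemb := hx
    simp only [Ψ, Equiv.trans_apply]
    rw [Equiv.Perm.viaFintypeEmbedding_apply_notMem_range ρ Wemb hx']
  have hinj : Function.Injective Ψ := by
    rintro ⟨⟨σ₀, h₀⟩, ρ⟩ ⟨⟨σ₀', h₀'⟩, ρ'⟩ h
    have hWa : ∀ a, σ₀ (W (ρ a)) = σ₀' (W (ρ' a)) := by
      intro a
      have h3 := DFunLike.congr_fun h (W a)
      rwa [happ ⟨σ₀, h₀⟩ ρ a, happ ⟨σ₀', h₀'⟩ ρ' a] at h3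
    set G : Fin k → Fin n := fun a => σ₀ (W (ρ a)) with hG
    have hGinj : Function.Injective G := fun a b hab => by
      have := hW (σ₀.injective hab); exact ρ.injective this
    have hg1 : StrictMono (G ∘ ⇑ρ.symm) := by
      have he : (G ∘ ⇑ρ.symm) = ⇑σ₀ ∘ W := by
        funext a; simp [hG, Function.comp]
      rw [he]; exact h₀
    have hg2 : StrictMono (G ∘ ⇑ρ'.symm) := by
      have he : (G ∘ ⇑ρ'.symm) = ⇑σ₀' ∘ W := by
        funext a
        simp only [hG, Function.comp_apply]
        rw [hWa (ρ'.symm a), Equiv.apply_symm_apply]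
      rw [he]; exact h₀'
    have hρ : ρ.symm = ρ'.symm := sort_uniq hGinj hg1 hg2
    have hρρ : ρ = ρ' := by
      have := congrArg Equiv.symm hρ; simpa using this
    subst hρρ
    have hσ : σ₀ = σ₀' := by
      apply Equiv.ext
      intro x
      by_cases hx : x ∈ Set.range W
      · obtain ⟨a, rfl⟩ := hx
        have h5 := hWa (ρ.symm a)
        rwa [Equiv.apply_symm_apply] at h5
      · have e1 := hnot ⟨σ₀, h₀⟩ ρ x hx
        have e2 := hnot ⟨σ₀', h₀'⟩ ρ x hx
        rw [← e1, ← e2, h]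
    simp [hσ]
  have hsurj : Function.Surjective Ψ := by
    intro σ
    set s := Tuple.sort (⇑σ ∘ W) with hs
    have hmono : Monotone ((⇑σ ∘ W) ∘ ⇑s) := Tuple.monotone_sort (⇑σ ∘ W)
    have hinj2 : Function.Injective ((⇑σ ∘ W) ∘ ⇑s) :=
      (σ.injective.comp hW).comp s.injective
    have hsm : StrictMono ((⇑σ ∘ W) ∘ ⇑s) := hmono.strictMono_of_injective hinj2
    refine ⟨(⟨(Equiv.Perm.viaFintypeEmbedding s Wemb).trans σ, ?_⟩, s.symm), ?_⟩
    · have he : (⇑((Equiv.Perm.viaFintypeEmbedding s Wemb).trans σ) ∘ W) = (⇑σ ∘ W) ∘ ⇑s := by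
        funext a
        simp only [Function.comp_apply, Equiv.trans_apply]
        rw [show W a = Wemb a from rfl, Equiv.Perm.viaFintypeEmbedding_apply_image s Wemb a]
        rfl
      rw [he]; exact hsm
    · apply Equiv.ext
      intro x
      by_cases hx : x ∈ Set.range W
      · obtain ⟨a, rfl⟩ := hx
        rw [show Ψ (⟨(Equiv.Perm.viaFintypeEmbedding s Wemb).trans σ, _⟩, s.symm) (W a)
            = ((Equiv.Perm.viaFintypeEmbedding s Wemb).trans σ) (W (s.symm a)) from happ _ _ a]
        simp only [Equiv.trans_apply]
        rw [show W (s.symm a) = Wemb (s.symm a) from rfl,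
          Equiv.Perm.viaFintypeEmbedding_apply_image s Wemb]
        simp [hWemb]
      · rw [hnot _ _ x hx]
        simp only [Equiv.trans_apply]
        rw [Equiv.Perm.viaFintypeEmbedding_apply_notMem_range s Wemb hx]
  have hcard := Fintype.card_congr (Equiv.ofBijective Ψ ⟨hinj, hsurj⟩)
  rw [Fintype.card_prod, Fintype.card_perm, Fintype.card_perm, Fintype.card_fin,
    Fintype.card_fin] at hcard
  rw [← hcard, Fintype.card_subtype]

end Stmt4Aux
namespace Stmt4Aux

variable {n : ℕ}

/-- available extension elements -/
def ext (Q : Finset (Finset (Fin n))) (A : Finset (Fin n)) : Finset (Fin n) :=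
  univ.filter (fun x => x ∉ A ∧ insert x A ∈ Q)

lemma mem_ext {Q : Finset (Finset (Fin n))} {A : Finset (Fin n)} {x : Fin n} :
    x ∈ ext Q A ↔ x ∉ A ∧ insert x A ∈ Q := by
  simp [ext]

def pick (σ : Equiv.Perm (Fin n)) (Q : Finset (Finset (Fin n))) (A : Finset (Fin n))
    (h : (ext Q A).Nonempty) : Fin n :=
  σ.symm (((ext Q A).image σ).min' (h.image σ))

lemma pick_mem {σ : Equiv.Perm (Fin n)} {Q : Finset (Finset (Fin n))} {A : Finset (Fin n)}
    (h : (ext Q A).Nonempty) : pick σ Q A h ∈ ext Q A := by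
  have hm := Finset.min'_mem ((ext Q A).image σ) (h.image σ)
  rw [Finset.mem_image] at hm
  obtain ⟨x, hx, hσx⟩ := hm
  have : pick σ Q A h = x := by
    rw [pick, ← hσx, Equiv.symm_apply_apply]
  rw [this]; exact hx

lemma pick_min {σ : Equiv.Perm (Fin n)} {Q : Finset (Finset (Fin n))} {A : Finset (Fin n)}
    (h : (ext Q A).Nonempty) {y : Fin n} (hy : y ∈ ext Q A) :
    σ (pick σ Q A h) ≤ σ y := by
  rw [pick, Equiv.apply_symm_apply]
  exact Finset.min'_le _ _ (Finset.mem_image_of_mem σ hy)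

def nxt (σ : Equiv.Perm (Fin n)) (Q : Finset (Finset (Fin n))) (A : Finset (Fin n)) :
    Finset (Fin n) :=
  if h : (ext Q A).Nonempty then insert (pick σ Q A h) A else A

def D (σ : Equiv.Perm (Fin n)) (Q : Finset (Finset (Fin n))) (q : Fin n) : ℕ → Finset (Fin n)
  | 0 => {q}
  | i+1 => nxt σ Q (D σ Q q i)

lemma subset_nxt (σ : Equiv.Perm (Fin n)) (Q : Finset (Finset (Fin n))) (A : Finset (Fin n)) :
    A ⊆ nxt σ Q A := by
  rw [nxt]; split
  · exact Finset.subset_insert _ _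
  · exact Finset.Subset.refl _

lemma nxt_mem {σ : Equiv.Perm (Fin n)} {Q : Finset (Finset (Fin n))} {A : Finset (Fin n)}
    (hA : A ∈ Q) : nxt σ Q A ∈ Q := by
  rw [nxt]; split
  · next h => exact (mem_ext.1 (pick_mem h)).2
  · exact hA

lemma D_mem {σ : Equiv.Perm (Fin n)} {Q : Finset (Finset (Fin n))} {q : Fin n}
    (hq : ({q} : Finset (Fin n)) ∈ Q) (i : ℕ) : D σ Q q i ∈ Q := by
  induction i with
  | zero => exact hq
  | succ i ih => exact nxt_mem ih

lemma D_subset {σ : Equiv.Perm (Fin n)} {Q : Finset (Finset (Fin n))} {q : Fin n}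
    {i j : ℕ} (hij : i ≤ j) : D σ Q q i ⊆ D σ Q q j := by
  induction j with
  | zero => simp_all
  | succ j ih =>
    rcases Nat.lt_or_ge i (j+1) with h | h
    · exact (ih (Nat.lt_succ_iff.1 h)).trans (subset_nxt σ Q (D σ Q q j))
    · have : i = j + 1 := le_antisymm hij h
      subst this; exact Finset.Subset.refl _

lemma q_mem_D {σ : Equiv.Perm (Fin n)} {Q : Finset (Finset (Fin n))} {q : Fin n} (i : ℕ) :
    q ∈ D σ Q q i := by
  have : q ∈ D σ Q q 0 := by simp [D]
  exact D_subset (Nat.zero_le i) this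

lemma D_stab {σ : Equiv.Perm (Fin n)} {Q : Finset (Finset (Fin n))} {q : Fin n} (i : ℕ) :
    ext Q (D σ Q q i) = ∅ ∨ i + 1 ≤ (D σ Q q i).card := by
  induction i with
  | zero => right; simp [D]
  | succ i ih =>
    by_cases h : (ext Q (D σ Q q i)).Nonempty
    · right
      have hni : D σ Q q (i+1) = insert (pick σ Q (D σ Q q i) h) (D σ Q q i) := by
        rw [show D σ Q q (i+1) = nxt σ Q (D σ Q q i) from rfl, nxt, dif_pos h]
      have hcard : (D σ Q q i).card ≥ i + 1 := by
        rcases ih with h0 | h0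
        · exact absurd h (by simp [h0, Finset.not_nonempty_empty])
        · exact h0
      rw [hni, Finset.card_insert_of_notMem (mem_ext.1 (pick_mem h)).1]
      omega
    · left
      have hni : D σ Q q (i+1) = D σ Q q i := by
        rw [show D σ Q q (i+1) = nxt σ Q (D σ Q q i) from rfl, nxt, dif_neg h]
      rw [hni]
      exact Finset.not_nonempty_iff_eq_empty.1 h

lemma ext_wE {σ : Equiv.Perm (Fin n)} {Q : Finset (Finset (Fin n))} {q : Fin n} :
    ext Q (D σ Q q n) = ∅ := by
  rcases D_stab (σ := σ) (Q := Q) (q := q) n with h | h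
  · exact h
  · exfalso
    have := Finset.card_le_card (Finset.subset_univ (D σ Q q n))
    rw [Finset.card_univ, Fintype.card_fin] at this
    omega

end Stmt4Aux

namespace Stmt4Aux
variable {n : ℕ}

/-- enumeration of `E` in increasing `σ`-order -/
def tau (σ : Equiv.Perm (Fin n)) (E : Finset (Fin n)) : Fin E.card → Fin n :=
  fun i => σ.symm ((E.image ⇑σ).orderIsoOfFin
    (by rw [Finset.card_image_of_injective _ σ.injective]) i : Fin n)

lemma tau_apply (σ : Equiv.Perm (Fin n)) (E : Finset (Fin n)) (i : Fin E.card) :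
    σ (tau σ E i) = ((E.image ⇑σ).orderIsoOfFin
      (by rw [Finset.card_image_of_injective _ σ.injective]) i : Fin n) := by
  rw [tau, Equiv.apply_symm_apply]

lemma tau_mem (σ : Equiv.Perm (Fin n)) (E : Finset (Fin n)) (i : Fin E.card) :
    tau σ E i ∈ E := by
  have h := ((E.image ⇑σ).orderIsoOfFin
    (by rw [Finset.card_image_of_injective _ σ.injective]) i).2
  rw [Finset.mem_image] at h
  obtain ⟨x, hx, hσx⟩ := h
  have : tau σ E i = x := by rw [tau, ← hσx, Equiv.symm_apply_apply]
  rwa [this]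

lemma tau_lt (σ : Equiv.Perm (Fin n)) (E : Finset (Fin n)) {i j : Fin E.card} (hij : i < j) :
    σ (tau σ E i) < σ (tau σ E j) := by
  rw [tau_apply, tau_apply]
  exact_mod_cast (OrderIso.lt_iff_lt _).2 hij

lemma tau_le (σ : Equiv.Perm (Fin n)) (E : Finset (Fin n)) {i j : Fin E.card} (hij : i ≤ j) :
    σ (tau σ E i) ≤ σ (tau σ E j) := by
  rcases lt_or_eq_of_le hij with h | h
  · exact le_of_lt (tau_lt σ E h)
  · subst h; exact le_refl _

lemma tau_surj (σ : Equiv.Perm (Fin n)) (E : Finset (Fin n)) {x : Fin n} (hx : x ∈ E) :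
    ∃ i, tau σ E i = x := by
  have hmem : σ x ∈ E.image ⇑σ := Finset.mem_image_of_mem _ hx
  obtain ⟨i, hi⟩ := ((E.image ⇑σ).orderIsoOfFin
    (by rw [Finset.card_image_of_injective _ σ.injective])).surjective ⟨σ x, hmem⟩
  refine ⟨i, ?_⟩
  have : σ (tau σ E i) = σ x := by
    rw [tau_apply]
    exact congrArg Subtype.val hi
  exact σ.injective this

lemma tau_inj (σ : Equiv.Perm (Fin n)) (E : Finset (Fin n)) :
    Function.Injective (tau σ E) := by
  intro i j hij
  by_contra hne
  rcases lt_or_gt_of_ne hne with h | h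
  · exact absurd (congrArg σ hij) (ne_of_lt (tau_lt σ E h))
  · exact absurd (congrArg σ hij).symm (ne_of_lt (tau_lt σ E h))

section Forced

variable {Q : Finset (Finset (Fin n))} {q : Fin n}

/-- the key step lemma: the chosen element is determined by the relative order data -/
lemma pick_forced {l : Finset (Fin n)} {f : Fin (l.erase q).card → Fin n}
    {A : Finset (Fin n)} (hA : (ext Q A).Nonempty) (hqA : q ∈ A)
    {σ : Equiv.Perm (Fin n)} (hf : tau σ (l.erase q) = f)
    (hpl : pick σ Q A hA ∈ l) :
    pick σ Q A hA = f ((Finset.univ.filter (fun i => f i ∈ ext Q A)).min'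
      (by
        have hpE : pick σ Q A hA ∈ l.erase q :=
          Finset.mem_erase.2 ⟨fun h => (mem_ext.1 (pick_mem hA)).1 (h ▸ hqA), hpl⟩
        obtain ⟨i₀, hi₀⟩ := tau_surj σ (l.erase q) hpE
        exact ⟨i₀, Finset.mem_filter.2 ⟨Finset.mem_univ _, by
          rw [← hf, hi₀]; exact pick_mem hA⟩⟩)) := by
  have hpE : pick σ Q A hA ∈ l.erase q :=
    Finset.mem_erase.2 ⟨fun h => (mem_ext.1 (pick_mem hA)).1 (h ▸ hqA), hpl⟩
  obtain ⟨i₀, hi₀⟩ := tau_surj σ (l.erase q) hpE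
  set J := Finset.univ.filter (fun i => f i ∈ ext Q A) with hJ
  have hJne : J.Nonempty := ⟨i₀, Finset.mem_filter.2 ⟨Finset.mem_univ _, by
    rw [← hf, hi₀]; exact pick_mem hA⟩⟩
  set j := J.min' hJne with hj
  have hjJ : j ∈ J := Finset.min'_mem _ _
  have hfj : f j ∈ ext Q A := (Finset.mem_filter.1 hjJ).2
  have h1 : σ (pick σ Q A hA) ≤ σ (f j) := pick_min hA hfj
  have hi₀J : i₀ ∈ J := Finset.mem_filter.2 ⟨Finset.mem_univ _, by
    rw [← hf, hi₀]; exact pick_mem hA⟩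
  have hji : j ≤ i₀ := Finset.min'_le _ _ hi₀J
  have h2 : σ (f j) ≤ σ (f i₀) := by
    rw [← hf]; exact tau_le σ (l.erase q) hji
  have hfi₀ : f i₀ = pick σ Q A hA := by rw [← hf]; exact hi₀
  rw [hfi₀] at h2
  have : σ (f j) = σ (pick σ Q A hA) := le_antisymm h2 h1
  exact (σ.injective this).symm

lemma forced_path {l : Finset (Fin n)} {f : Fin (l.erase q).card → Fin n}
    {σ σ' : Equiv.Perm (Fin n)}
    (hl : D σ Q q n = l) (hl' : D σ' Q q n = l)
    (hf : tau σ (l.erase q) = f) (hf' : tau σ' (l.erase q) = f) :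
    ∀ i, i ≤ n → D σ Q q i = D σ' Q q i := by
  intro i
  induction i with
  | zero => intro _; rfl
  | succ i ih =>
    intro hin
    have hii : i ≤ n := Nat.le_of_succ_le hin
    have hA := ih hii
    set A := D σ Q q i with hAdef
    by_cases h : (ext Q A).Nonempty
    · have hσ : D σ Q q (i+1) = insert (pick σ Q A h) A := by
        rw [show D σ Q q (i+1) = nxt σ Q (D σ Q q i) from rfl, nxt, dif_pos h]
      have hσ' : D σ' Q q (i+1) = insert (pick σ' Q A h) A := by
        rw [show D σ' Q q (i+1) = nxt σ' Q (D σ' Q q i) from rfl, ← hA, nxt, dif_pos h]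
      have hqA : q ∈ A := q_mem_D i
      have hpl : pick σ Q A h ∈ l := by
        have : D σ Q q (i+1) ⊆ D σ Q q n := D_subset hin
        rw [hl] at this
        exact this (hσ ▸ Finset.mem_insert_self _ _)
      have hpl' : pick σ' Q A h ∈ l := by
        have : D σ' Q q (i+1) ⊆ D σ' Q q n := D_subset hin
        rw [hl'] at this
        exact this (hσ' ▸ Finset.mem_insert_self _ _)
      have e1 := pick_forced (Q := Q) h hqA hf hpl
      have e2 := pick_forced (Q := Q) h hqA hf' hpl'
      rw [hσ, hσ', e1, e2]
    · have hσ : D σ Q q (i+1) = A := by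
        rw [show D σ Q q (i+1) = nxt σ Q (D σ Q q i) from rfl, nxt, dif_neg h]
      have hσ' : D σ' Q q (i+1) = A := by
        rw [show D σ' Q q (i+1) = nxt σ' Q (D σ' Q q i) from rfl, ← hA, nxt, dif_neg h]
      rw [hσ, hσ', hA]

end Forced
end Stmt4Aux

namespace Stmt4Aux
variable {n : ℕ}

lemma z_witness {Q : Finset (Finset (Fin n))} {q : Fin n}
    (hqQ : ({q} : Finset (Fin n)) ∈ Q)
    (hbr2 : ∀ A ∈ Q, (∃ B ∈ Q, A ⊆ B ∧ B ≠ A) → 2 ≤ (ext Q A).card)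
    {l : Finset (Fin n)} {f : Fin (l.erase q).card → Fin n}
    (hE : 0 < (l.erase q).card)
    {σ₀ : Equiv.Perm (Fin n)} (hl₀ : D σ₀ Q q n = l) (hf₀ : tau σ₀ (l.erase q) = f) :
    ∃ z : Fin n, ∀ σ : Equiv.Perm (Fin n), D σ Q q n = l → tau σ (l.erase q) = f →
      ∀ i, σ (f i) < σ z := by
  classical
  have hn1 : 0 < n := q.pos
  set md := f ⟨(l.erase q).card - 1, by omega⟩ with hmd
  have hmdE : md ∈ l.erase q := by
    rw [hmd, ← hf₀]; exact tau_mem σ₀ (l.erase q) _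
  have hmdl : md ∈ l := Finset.mem_of_mem_erase hmdE
  have hmdq : md ≠ q := Finset.ne_of_mem_erase hmdE
  have hP : md ∈ D σ₀ Q q (n - 1 + 1) := by
    have h1 : n - 1 + 1 = n := by omega
    rw [h1, hl₀]; exact hmdl
  have hex : ∃ i, md ∈ D σ₀ Q q (i+1) := ⟨n - 1, hP⟩
  set js := Nat.find hex with hjs
  have hspec : md ∈ D σ₀ Q q (js + 1) := Nat.find_spec hex
  have hjn : js + 1 ≤ n := by
    have h2 : js ≤ n - 1 := by rw [hjs]; exact Nat.find_le hP
    omega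
  have hnot : md ∉ D σ₀ Q q js := by
    rcases Nat.eq_zero_or_pos js with h0 | hpos
    · rw [h0]
      simp only [D, Finset.mem_singleton]
      exact hmdq
    · obtain ⟨jj, hjj⟩ := Nat.exists_eq_succ_of_ne_zero (Nat.pos_iff_ne_zero.1 hpos)
      rw [hjj]
      have hlt : jj < Nat.find hex := by omega
      exact Nat.find_min hex hlt
  have hne : (ext Q (D σ₀ Q q js)).Nonempty := by
    by_contra h
    have : D σ₀ Q q (js+1) = D σ₀ Q q js := by
      rw [show D σ₀ Q q (js+1) = nxt σ₀ Q (D σ₀ Q q js) from rfl, nxt, dif_neg h]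
    rw [this] at hspec
    exact hnot hspec
  have hstep₀ : D σ₀ Q q (js+1) = insert (pick σ₀ Q (D σ₀ Q q js) hne) (D σ₀ Q q js) := by
    rw [show D σ₀ Q q (js+1) = nxt σ₀ Q (D σ₀ Q q js) from rfl, nxt, dif_pos hne]
  have hpick₀ : pick σ₀ Q (D σ₀ Q q js) hne = md := by
    rw [hstep₀] at hspec
    rcases Finset.mem_insert.1 hspec with h | h
    · exact h.symm
    · exact absurd h hnot
  have hBQ : insert md (D σ₀ Q q js) ∈ Q := by
    rw [← hpick₀]
    exact (mem_ext.1 (pick_mem hne)).2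
  have hAQ : D σ₀ Q q js ∈ Q := D_mem hqQ js
  have hc2 : 2 ≤ (ext Q (D σ₀ Q q js)).card := by
    refine hbr2 _ hAQ ⟨insert md (D σ₀ Q q js), hBQ, Finset.subset_insert _ _, ?_⟩
    intro h
    exact hnot (h ▸ Finset.mem_insert_self md _)
  have hmdext : md ∈ ext Q (D σ₀ Q q js) := hpick₀ ▸ pick_mem hne
  have herase : ((ext Q (D σ₀ Q q js)).erase md).Nonempty := by
    rw [← Finset.card_pos, Finset.card_erase_of_mem hmdext]
    omega
  refine ⟨((ext Q (D σ₀ Q q js)).erase md).min' herase, ?_⟩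
  intro σ hl hf i
  set z := ((ext Q (D σ₀ Q q js)).erase md).min' herase with hz
  have hzmem := Finset.min'_mem ((ext Q (D σ₀ Q q js)).erase md) herase
  have hzext : z ∈ ext Q (D σ₀ Q q js) := Finset.mem_of_mem_erase hzmem
  have hzne : z ≠ md := Finset.ne_of_mem_erase hzmem
  -- the walk of σ agrees with that of σ₀
  have hDj : D σ Q q js = D σ₀ Q q js := forced_path hl hl₀ hf hf₀ js (by omega)
  have hDj1 : D σ Q q (js+1) = D σ₀ Q q (js+1) := forced_path hl hl₀ hf hf₀ (js+1) hjn
  have hstep : D σ Q q (js+1) = insert (pick σ Q (D σ₀ Q q js) hne) (D σ₀ Q q js) := by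
    rw [show D σ Q q (js+1) = nxt σ Q (D σ Q q js) from rfl, hDj, nxt, dif_pos hne]
  have hpick : pick σ Q (D σ₀ Q q js) hne = md := by
    have : md ∈ insert (pick σ Q (D σ₀ Q q js) hne) (D σ₀ Q q js) := by
      rw [← hstep, hDj1]; exact hspec
    rcases Finset.mem_insert.1 this with h | h
    · exact h.symm
    · exact absurd h hnot
  have hlt : σ md < σ z := by
    have h1 : σ md ≤ σ z := by
      rw [← hpick]; exact pick_min hne hzext
    have h2 : σ md ≠ σ z := fun h => hzne (σ.injective h.symm)
    exact lt_of_le_of_ne h1 h2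
  have hle : σ (f i) ≤ σ md := by
    rw [hmd, ← hf]
    exact tau_le σ (l.erase q) (by
      rw [Fin.le_def]
      simp only []
      omega)
  exact lt_of_le_of_lt hle hlt

end Stmt4Aux


namespace Stmt4Aux
variable {n : ℕ}

lemma card_inj_funs (m : ℕ) (E : Finset (Fin n)) (hEm : E.card = m) :
    ((univ : Finset (Fin m → Fin n)).filter
      (fun f => Function.Injective f ∧ ∀ i, f i ∈ E)).card = Nat.factorial m := by
  classical
  have e : {f : Fin m → Fin n // Function.Injective f ∧ ∀ i, f i ∈ E} ≃
      (Fin m ↪ {x : Fin n // x ∈ E}) :=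
    { toFun := fun fh => ⟨fun i => ⟨fh.1 i, fh.2.2 i⟩,
        fun a b hab => fh.2.1 (congrArg Subtype.val hab)⟩
      invFun := fun g => ⟨fun i => (g i : Fin n),
        ⟨fun a b hab => g.injective (Subtype.ext hab), fun i => (g i).2⟩⟩
      left_inv := fun fh => rfl
      right_inv := fun g => by
        apply Function.Embedding.ext
        intro i
        rfl }
  have h1 : ((univ : Finset (Fin m → Fin n)).filter
      (fun f => Function.Injective f ∧ ∀ i, f i ∈ E)).card
      = Fintype.card {f : Fin m → Fin n // Function.Injective f ∧ ∀ i, f i ∈ E} :=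
    (Fintype.card_subtype _).symm
  rw [h1, Fintype.card_congr e, Fintype.card_embedding_eq, Fintype.card_coe, hEm,
    Fintype.card_fin, Nat.descFactorial_self]

lemma cover_insert {A C : Finset (Fin n)} (hss : A ⊂ C) (hcard : C.card = A.card + 1) :
    ∀ x ∈ C \ A, C = insert x A := by
  intro x hx
  have hsd : (C \ A).card = 1 := by
    rw [Finset.card_sdiff_of_subset hss.subset, hcard]; omega
  obtain ⟨y, hy⟩ := Finset.card_eq_one.1 hsd
  rw [hy, Finset.mem_singleton] at hx
  subst hx
  rw [← Finset.union_sdiff_of_subset hss.subset, hy, Finset.insert_eq, Finset.union_comm]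

lemma branching_ext {P : Finset (Finset (Fin n))} (hbr : Branching P) (q : Fin n) :
    ∀ A ∈ P.filter (fun y => ({q} : Finset (Fin n)) ⊆ y),
      (∃ B ∈ P.filter (fun y => ({q} : Finset (Fin n)) ⊆ y), A ⊆ B ∧ B ≠ A) →
      2 ≤ (ext (P.filter (fun y => ({q} : Finset (Fin n)) ⊆ y)) A).card := by
  classical
  rintro A hA ⟨B, hB, hAB, hBA⟩
  have hAP : A ∈ P := (Finset.mem_filter.1 hA).1
  have hqA : ({q} : Finset (Fin n)) ⊆ A := (Finset.mem_filter.1 hA).2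
  have hnm : ¬ IsMaximalIn P A := fun hm => hBA (hm.2 B (Finset.mem_filter.1 hB).1 hAB)
  have h2 := hbr A hAP hnm
  refine le_trans h2 (Finset.card_le_card_of_injOn
    (fun B => if hB2 : (B \ A).Nonempty then (B \ A).min' hB2 else q) ?_ ?_)
  · intro C hC
    obtain ⟨hCP, hss, hcard⟩ : C ∈ P ∧ A ⊂ C ∧ C.card = A.card + 1 := by
      have := Finset.mem_filter.1 hC
      exact ⟨this.1, this.2.1, this.2.2⟩
    have hpos : (C \ A).Nonempty := Finset.sdiff_nonempty.2 (fun hsub => hss.2 hsub)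
    have hxmem := Finset.min'_mem (C \ A) hpos
    have hCeq : C = insert ((C \ A).min' hpos) A := cover_insert hss hcard _ hxmem
    simp only [dif_pos hpos, Finset.mem_coe, mem_ext]
    constructor
    · exact (Finset.mem_sdiff.1 hxmem).2
    · rw [← hCeq]
      exact Finset.mem_filter.2 ⟨hCP, hqA.trans hss.subset⟩
  · intro C₁ h₁ C₂ h₂ heq
    simp only [Finset.mem_coe, Finset.mem_filter] at h₁ h₂
    have hpos₁ : (C₁ \ A).Nonempty := Finset.sdiff_nonempty.2 (fun hsub => h₁.2.1.2 hsub)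
    have hpos₂ : (C₂ \ A).Nonempty := Finset.sdiff_nonempty.2 (fun hsub => h₂.2.1.2 hsub)
    simp only [dif_pos hpos₁, dif_pos hpos₂] at heq
    have hC₁ : C₁ = insert ((C₁ \ A).min' hpos₁) A :=
      cover_insert h₁.2.1 h₁.2.2 _ (Finset.min'_mem _ _)
    have hC₂ : C₂ = insert ((C₂ \ A).min' hpos₂) A :=
      cover_insert h₂.2.1 h₂.2.2 _ (Finset.min'_mem _ _)
    rw [hC₁, hC₂, heq]

lemma leaf_bound {Q : Finset (Finset (Fin n))} {q : Fin n}
    (hqQ : ({q} : Finset (Fin n)) ∈ Q)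
    (hbr2 : ∀ A ∈ Q, (∃ B ∈ Q, A ⊆ B ∧ B ≠ A) → 2 ≤ (ext Q A).card)
    {l : Finset (Fin n)} (hql : q ∈ l) :
    ((univ : Finset (Equiv.Perm (Fin n))).filter
      (fun σ => D σ Q q n = l)).card * l.card ≤ Nat.factorial n := by
  classical
  have hml : (l.erase q).card + 1 = l.card := Finset.card_erase_add_one hql
  rcases Nat.eq_zero_or_pos (l.erase q).card with h0 | hpos
  · have hl1 : l.card = 1 := by omega
    rw [hl1, mul_one]
    calc ((univ : Finset (Equiv.Perm (Fin n))).filter (fun σ => D σ Q q n = l)).card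
        ≤ (univ : Finset (Equiv.Perm (Fin n))).card := Finset.card_filter_le _ _
      _ = Nat.factorial n := by
          rw [Finset.card_univ, Fintype.card_perm, Fintype.card_fin]
  · -- fiber over the order data
    set Flt := (univ : Finset (Equiv.Perm (Fin n))).filter (fun σ => D σ Q q n = l) with hFlt
    set B' := ((univ : Finset (Fin (l.erase q).card → Fin n)).filter
      (fun f => Function.Injective f ∧ ∀ i, f i ∈ l.erase q)) with hB'
    have hfib : Flt.card = ∑ f ∈ B', (Flt.filter (fun σ => tau σ (l.erase q) = f)).card := by
      apply Finset.card_eq_sum_card_fiberwise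
      intro σ _
      rw [hB', Finset.mem_coe, Finset.mem_filter]
      exact ⟨Finset.mem_univ _, tau_inj σ (l.erase q), fun i => tau_mem σ (l.erase q) i⟩
    have hperf : ∀ f ∈ B',
        (Flt.filter (fun σ => tau σ (l.erase q) = f)).card
          * Nat.factorial ((l.erase q).card + 1) ≤ Nat.factorial n := by
      intro f _
      by_cases hfe : (Flt.filter (fun σ => tau σ (l.erase q) = f)).Nonempty
      · obtain ⟨σ₀, hσ₀⟩ := hfe
        have hσ₀' := Finset.mem_filter.1 hσ₀
        have hl₀ : D σ₀ Q q n = l := (Finset.mem_filter.1 hσ₀'.1).2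
        have hf₀ : tau σ₀ (l.erase q) = f := hσ₀'.2
        obtain ⟨z, hz⟩ := z_witness hqQ hbr2 hpos hl₀ hf₀
        set W : Fin ((l.erase q).card + 1) → Fin n :=
          fun j => if h : (j : ℕ) < (l.erase q).card then f ⟨j, h⟩ else z with hW
        have hWlt : ∀ (j : Fin ((l.erase q).card + 1)) (h : (j : ℕ) < (l.erase q).card),
            W j = f ⟨j, h⟩ := by
          intro j h; rw [hW]; exact dif_pos h
        have hWge : ∀ (j : Fin ((l.erase q).card + 1)),
            ¬ ((j : ℕ) < (l.erase q).card) → W j = z := by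
          intro j h; rw [hW]; exact dif_neg h
        have hsm : ∀ σ ∈ Flt.filter (fun σ => tau σ (l.erase q) = f),
            StrictMono (⇑σ ∘ W) := by
          intro σ hσ
          have hσ' := Finset.mem_filter.1 hσ
          have hlσ : D σ Q q n = l := (Finset.mem_filter.1 hσ'.1).2
          have hfσ : tau σ (l.erase q) = f := hσ'.2
          apply Fin.strictMono_iff_lt_succ.2
          intro i
          have hci : ((Fin.castSucc i : Fin ((l.erase q).card + 1)) : ℕ) = (i : ℕ) :=
            Fin.coe_castSucc i
          have hsi : ((Fin.succ i : Fin ((l.erase q).card + 1)) : ℕ) = (i : ℕ) + 1 :=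
            Fin.val_succ i
          have hWc : W (Fin.castSucc i) = f ⟨(i : ℕ), i.isLt⟩ := by
            rw [hWlt (Fin.castSucc i) (by rw [hci]; exact i.isLt)]
            exact congrArg f (Fin.ext hci)
          show σ (W (Fin.castSucc i)) < σ (W (Fin.succ i))
          by_cases hi1 : (i : ℕ) + 1 < (l.erase q).card
          · have hWs : W (Fin.succ i) = f ⟨(i : ℕ) + 1, hi1⟩ := by
              rw [hWlt (Fin.succ i) (by rw [hsi]; exact hi1)]
              exact congrArg f (Fin.ext hsi)
            rw [hWc, hWs, ← hfσ]
            exact tau_lt σ (l.erase q) (by rw [Fin.lt_def]; simp only []; omega)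
          · have hWs : W (Fin.succ i) = z := by
              apply hWge
              rw [hsi]
              omega
            rw [hWc, hWs]
            exact hz σ hlσ hfσ ⟨(i : ℕ), i.isLt⟩
        have hσ₀mem : σ₀ ∈ Flt.filter (fun σ => tau σ (l.erase q) = f) := hσ₀
        have hWinj : Function.Injective W := by
          intro a b hab
          exact (hsm σ₀ hσ₀mem).injective (show (⇑σ₀ ∘ W) a = (⇑σ₀ ∘ W) b from
            congrArg σ₀ hab)
        have hsub : Flt.filter (fun σ => tau σ (l.erase q) = f) ⊆
            (univ : Finset (Equiv.Perm (Fin n))).filter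
              (fun σ : Equiv.Perm (Fin n) => StrictMono (⇑σ ∘ W)) := by
          intro σ hσ
          exact Finset.mem_filter.2 ⟨Finset.mem_univ _, hsm σ hσ⟩
        calc (Flt.filter (fun σ => tau σ (l.erase q) = f)).card
            * Nat.factorial ((l.erase q).card + 1)
            ≤ ((univ : Finset (Equiv.Perm (Fin n))).filter
              (fun σ : Equiv.Perm (Fin n) => StrictMono (⇑σ ∘ W))).card
              * Nat.factorial ((l.erase q).card + 1) :=
              Nat.mul_le_mul_right _ (Finset.card_le_card hsub)
          _ = Nat.factorial n := count_strictMono W hWinj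
      · rw [Finset.not_nonempty_iff_eq_empty.1 hfe]
        simp
    have hmain : Flt.card * Nat.factorial ((l.erase q).card + 1)
        ≤ Nat.factorial (l.erase q).card * Nat.factorial n := by
      calc Flt.card * Nat.factorial ((l.erase q).card + 1)
          = ∑ f ∈ B', (Flt.filter (fun σ => tau σ (l.erase q) = f)).card
            * Nat.factorial ((l.erase q).card + 1) := by
            rw [hfib, Finset.sum_mul]
        _ ≤ ∑ _f ∈ B', Nat.factorial n := Finset.sum_le_sum hperf
        _ = B'.card * Nat.factorial n := by rw [Finset.sum_const, smul_eq_mul]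
        _ = Nat.factorial (l.erase q).card * Nat.factorial n := by
            rw [hB', card_inj_funs _ _ rfl]
    have hfin : Flt.card * l.card ≤ Nat.factorial n := by
      rw [← hml]
      have hexp : Nat.factorial ((l.erase q).card + 1)
          = ((l.erase q).card + 1) * Nat.factorial (l.erase q).card :=
        Nat.factorial_succ _
      rw [hexp] at hmain
      have h3 : (Flt.card * ((l.erase q).card + 1)) * Nat.factorial (l.erase q).card
          ≤ Nat.factorial n * Nat.factorial (l.erase q).card := by
        calc (Flt.card * ((l.erase q).card + 1)) * Nat.factorial (l.erase q).card
            = Flt.card * (((l.erase q).card + 1) * Nat.factorial (l.erase q).card) := by ring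
          _ ≤ Nat.factorial (l.erase q).card * Nat.factorial n := hmain
          _ = Nat.factorial n * Nat.factorial (l.erase q).card := by ring
      exact Nat.le_of_mul_le_mul_right h3 (Nat.factorial_pos _)
    exact hfin

end Stmt4Aux

open Finset in
/-- For a rooted branching subposet `P` of `B_n` and a singleton `{q} ∈ P`, the sum of
`1/|l|` over the leaves `l` of the subposet `P^q = {y ∈ P : {q} ⊆ y}` is at least `1`. -/
theorem stmt4 {n : ℕ} (P : Finset (Finset (Fin n)))
    (hroot : (∅ : Finset (Fin n)) ∈ P) (hbr : Branching P)
    (q : Fin n) (hq : ({q} : Finset (Fin n)) ∈ P) :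
    1 ≤ ∑ l ∈ (P.filter (fun y => {q} ⊆ y)).filter
          (fun A => ∀ B ∈ P.filter (fun y => {q} ⊆ y), A ⊆ B → B = A),
        (1 / (l.card : ℚ)) := by
  classical
  set Q := P.filter (fun y => ({q} : Finset (Fin n)) ⊆ y) with hQdef
  have hqQ : ({q} : Finset (Fin n)) ∈ Q := Finset.mem_filter.2 ⟨hq, Finset.Subset.refl _⟩
  have hbr2 : ∀ A ∈ Q, (∃ B ∈ Q, A ⊆ B ∧ B ≠ A) → 2 ≤ (Stmt4Aux.ext Q A).card :=
    Stmt4Aux.branching_ext hbr q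
  set L := Q.filter (fun A => ∀ B ∈ Q, A ⊆ B → B = A) with hL
  have hwL : ∀ σ : Equiv.Perm (Fin n), Stmt4Aux.D σ Q q n ∈ L := by
    intro σ
    rw [hL, Finset.mem_filter]
    refine ⟨Stmt4Aux.D_mem hqQ n, ?_⟩
    intro B hB hsub
    by_contra hne
    have h2 := hbr2 (Stmt4Aux.D σ Q q n) (Stmt4Aux.D_mem hqQ n) ⟨B, hB, hsub, hne⟩
    rw [Stmt4Aux.ext_wE] at h2
    simp at h2
  have hfib : (univ : Finset (Equiv.Perm (Fin n))).card
      = ∑ l ∈ L, ((univ : Finset (Equiv.Perm (Fin n))).filter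
          (fun σ => Stmt4Aux.D σ Q q n = l)).card :=
    Finset.card_eq_sum_card_fiberwise (fun σ _ => hwL σ)
  have hNsum : ∑ l ∈ L, ((univ : Finset (Equiv.Perm (Fin n))).filter
      (fun σ => Stmt4Aux.D σ Q q n = l)).card = Nat.factorial n := by
    rw [← hfib, Finset.card_univ, Fintype.card_perm, Fintype.card_fin]
  have hkey : ∀ l ∈ L, ((univ : Finset (Equiv.Perm (Fin n))).filter
      (fun σ => Stmt4Aux.D σ Q q n = l)).card * l.card ≤ Nat.factorial n := by
    intro l hl
    have hlQ : l ∈ Q := Finset.mem_filter.1 hl |>.1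
    have hql : q ∈ l := Finset.singleton_subset_iff.1 (Finset.mem_filter.1 hlQ).2
    exact Stmt4Aux.leaf_bound hqQ hbr2 hql
  have hpos : (0 : ℚ) < (Nat.factorial n : ℚ) := by exact_mod_cast Nat.factorial_pos n
  calc (1 : ℚ) = (Nat.factorial n : ℚ) / (Nat.factorial n : ℚ) :=
        (div_self (ne_of_gt hpos)).symm
    _ = (∑ l ∈ L, (((univ : Finset (Equiv.Perm (Fin n))).filter
          (fun σ => Stmt4Aux.D σ Q q n = l)).card : ℚ)) / (Nat.factorial n : ℚ) := by
        rw [← hNsum, Nat.cast_sum]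
    _ = ∑ l ∈ L, (((univ : Finset (Equiv.Perm (Fin n))).filter
          (fun σ => Stmt4Aux.D σ Q q n = l)).card : ℚ) / (Nat.factorial n : ℚ) :=
        Finset.sum_div _ _ _
    _ ≤ ∑ l ∈ L, (1 / (l.card : ℚ)) := by
        apply Finset.sum_le_sum
        intro l hl
        have hlQ : l ∈ Q := Finset.mem_filter.1 hl |>.1
        have hql : q ∈ l := Finset.singleton_subset_iff.1 (Finset.mem_filter.1 hlQ).2
        have hcl : (0 : ℚ) < (l.card : ℚ) := by
          exact_mod_cast Finset.card_pos.2 ⟨q, hql⟩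
        rw [div_le_div_iff₀ hpos hcl, one_mul]
        exact_mod_cast hkey l hl
end

section
/- For every n ≥ 2, define an n×∞ matrix x by: row i (1 ≤ i ≤ n) has entries x_{i,j} = i+j−1 (mod n, with representatives in {1,...,n}) for j ≤ n−2, and x_{i,j} = i+n−3 (mod n, representative in {1,...,n}) for all j ≥ n−2. Then: (a) in each row the first n−2 entries are distinct and none of them is repeated later in the row; (b) for every t ≥ 1, the n sets {x_{i,1},...,x_{i,t}} for i = 1,...,n are pairwise distinct. -/
open Finset in
/-- The element just before the start of an arc of length `m ≤ n-1` is not in the arc. -/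
lemma arc_notmem (n a m : ℕ) (hn : 2 ≤ n) (hm : m ≤ n - 1) :
    (a + (n - 1)) % n ∉ (Finset.range m).image (fun s => (a + s) % n) := by
  simp only [Finset.mem_image, Finset.mem_range, not_exists]
  rintro s ⟨hs, heq⟩
  have h1 : n ∣ (a + (n - 1)) - (a + s) :=
    (Nat.modEq_iff_dvd' (by omega)).mp heq
  have h2 := Nat.le_of_dvd (by omega) h1
  omega

open Finset in
/-- Two arcs of the same length `1 ≤ m ≤ n-1` are equal only if their starts agree. -/
lemma arc_start (n a a' m : ℕ) (hn : 2 ≤ n) (ha : a < n) (ha' : a' < n)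
    (hm1 : 1 ≤ m) (hm : m ≤ n - 1)
    (h : (Finset.range m).image (fun s => (a + s) % n)
        = (Finset.range m).image (fun s => (a' + s) % n)) : a = a' := by
  have hmem : a' ∈ (Finset.range m).image (fun s => (a + s) % n) := by
    rw [h]
    exact Finset.mem_image.mpr ⟨0, Finset.mem_range.mpr hm1, by simp [Nat.mod_eq_of_lt ha']⟩
  obtain ⟨s, hs, hseq⟩ := Finset.mem_image.mp hmem
  rw [Finset.mem_range] at hs
  rcases Nat.eq_zero_or_pos s with h0 | h0
  · subst h0
    simp only [Nat.add_zero] at hseq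
    rw [Nat.mod_eq_of_lt ha] at hseq
    omega
  · exfalso
    have key : (a' + (n - 1)) % n = (a + (s - 1)) % n := by
      rw [← hseq, Nat.mod_add_mod]
      have h3 : a + s + (n - 1) = a + (s - 1) + n := by omega
      rw [h3, Nat.add_mod_right]
    have hin : (a + (s - 1)) % n ∈ (Finset.range m).image (fun s => (a + s) % n) :=
      Finset.mem_image.mpr ⟨s - 1, Finset.mem_range.mpr (by omega), rfl⟩
    rw [h] at hin
    rw [← key] at hin
    exact arc_notmem n a' m hn hm hin

open Finset in
/-- The initial-segment set of row `i` at time `t` is an arc of length `min t (n-1)`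
starting at `i-1`, shifted by `+1`. -/
lemma row_image (n t i : ℕ) (hn : 2 ≤ n) (hi : 1 ≤ i) (ht : 1 ≤ t)
    (x : ℕ → ℕ → ℕ)
    (hx : ∀ i j, x i j = ((i + min j (n - 1) + n - 2) % n) + 1) :
    (Finset.Icc 1 t).image (x i)
      = ((Finset.range (min t (n - 1))).image (fun s => ((i - 1) + s) % n)).image
          (fun v => v + 1) := by
  ext v
  simp only [Finset.mem_image, Finset.mem_Icc, Finset.mem_range]
  constructor
  · rintro ⟨j, ⟨hj1, hj2⟩, rfl⟩
    refine ⟨((i - 1) + (min j (n - 1) - 1)) % n, ⟨min j (n - 1) - 1, ?_, rfl⟩, ?_⟩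
    · have h1 : 1 ≤ min j (n - 1) := le_min hj1 (by omega)
      have h2 : min j (n - 1) ≤ min t (n - 1) := min_le_min hj2 le_rfl
      omega
    · rw [hx]
      have h1 : 1 ≤ min j (n - 1) := le_min hj1 (by omega)
      have h3 : i + min j (n - 1) + n - 2 = (i - 1) + (min j (n - 1) - 1) + n := by omega
      rw [h3, Nat.add_mod_right]
  · rintro ⟨w, ⟨s, hs, rfl⟩, rfl⟩
    refine ⟨s + 1, ⟨by omega, by omega⟩, ?_⟩
    rw [hx]
    have hmin : min (s + 1) (n - 1) = s + 1 := min_eq_left (by omega)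
    rw [hmin]
    have h3 : i + (s + 1) + n - 2 = (i - 1) + s + n := by omega
    rw [h3, Nat.add_mod_right]

/-- The explicit solution of Keller's problem when every set is `{1,…,n}` : row `i`
(`1 ≤ i ≤ n`) is `i, i+1, …, i+n-3, i+n−2 repeated, …` taken mod `n` with representatives
in `{1,…,n}`.  (a) the first `n-2` entries of each row are distinct and never repeated
later; (b) at every time `t ≥ 1` the `n` initial-segment sets are pairwise distinct. -/
theorem stmt5 (n : ℕ) (hn : 2 ≤ n)
    (x : ℕ → ℕ → ℕ)
    (hx : ∀ i j, x i j = ((i + min j (n - 1) + n - 2) % n) + 1) :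
    (∀ i ∈ Finset.Icc 1 n, ∀ j j' : ℕ, 1 ≤ j → j ≤ n - 2 → j < j' → x i j ≠ x i j') ∧
    (∀ t : ℕ, 1 ≤ t → ∀ i ∈ Finset.Icc 1 n, ∀ i' ∈ Finset.Icc 1 n, i ≠ i' →
      (Finset.Icc 1 t).image (x i) ≠ (Finset.Icc 1 t).image (x i')) := by
  constructor
  · -- part (a)
    intro i hi j j' hj1 hj2 hjj' heq
    rw [hx, hx] at heq
    have hminj : min j (n - 1) = j := min_eq_left (by omega)
    rw [hminj] at heq
    have hm1 : j + 1 ≤ min j' (n - 1) := le_min (by omega) (by omega)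
    have hm2 : min j' (n - 1) ≤ n - 1 := min_le_right _ _
    rw [Finset.mem_Icc] at hi
    have heq2 : (i + j + n - 2) % n = (i + min j' (n - 1) + n - 2) % n := by omega
    have hdvd : n ∣ (i + min j' (n - 1) + n - 2) - (i + j + n - 2) :=
      (Nat.modEq_iff_dvd' (by omega)).mp heq2
    have := Nat.le_of_dvd (by omega) hdvd
    omega
  · -- part (b)
    intro t ht i hi i' hi' hne heq
    rw [Finset.mem_Icc] at hi hi'
    rw [row_image n t i hn hi.1 ht x hx, row_image n t i' hn hi'.1 ht x hx] at heq
    have hinj : Function.Injective (fun v : ℕ => v + 1) := fun a b h => by simpa using h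
    have heq2 := Finset.image_injective hinj heq
    have := arc_start n (i - 1) (i' - 1) (min t (n - 1)) hn (by omega) (by omega)
      (le_min ht (by omega)) (min_le_right _ _) heq2
    omega
end

section
/- Let S_1, S_2, ... be a sequence of finite sets each of cardinality at least 2, and let c be any fixed element. Then there exists a sequence x_1, x_2, ... with x_j ∈ S_j, x_j ≠ c for all j, and which is regular: x_j ∉ {x_1,...,x_{j−1}} whenever |S_j \ {x_1,...,x_{j−1}}| ≥ 2. -/
open Finset

noncomputable def pickF {α : Type*} [DecidableEq α] (S : ℕ → Finset α)
    (hS : ∀ j, 2 ≤ (S j).card) (c : α) (j : ℕ) (U : Finset α) : α :=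
  if h : 2 ≤ ((S j) \ U).card then
    (Finset.exists_mem_ne h c).choose
  else
    (Finset.exists_mem_ne (hS j) c).choose

noncomputable def usedF {α : Type*} [DecidableEq α] (S : ℕ → Finset α)
    (hS : ∀ j, 2 ≤ (S j).card) (c : α) : ℕ → Finset α
  | 0 => ∅
  | j + 1 => insert (pickF S hS c j (usedF S hS c j)) (usedF S hS c j)

lemma pickF_spec {α : Type*} [DecidableEq α] (S : ℕ → Finset α)
    (hS : ∀ j, 2 ≤ (S j).card) (c : α) (j : ℕ) (U : Finset α) :
    pickF S hS c j U ∈ S j ∧ pickF S hS c j U ≠ c ∧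
      (2 ≤ ((S j) \ U).card → pickF S hS c j U ∉ U) := by
  unfold pickF
  split_ifs with h
  · obtain ⟨hb, hbc⟩ := (Finset.exists_mem_ne h c).choose_spec
    rw [Finset.mem_sdiff] at hb
    exact ⟨hb.1, hbc, fun _ => hb.2⟩
  · obtain ⟨hb, hbc⟩ := (Finset.exists_mem_ne (hS j) c).choose_spec
    exact ⟨hb, hbc, fun h2 => absurd h2 h⟩

open Finset in
/-- One may always construct a regular representative of a sequence of finite sets of
cardinality at least 2 while avoiding one designated forbidden element `c`. -/
theorem stmt9 {α : Type*} [DecidableEq α]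
    (S : ℕ → Finset α) (hS : ∀ j, 2 ≤ (S j).card) (c : α) :
    ∃ x : ℕ → α, ∀ j : ℕ,
      x j ∈ S j ∧ x j ≠ c ∧
      (2 ≤ ((S j) \ ((Finset.range j).image x)).card →
        x j ∉ (Finset.range j).image x) := by
  refine ⟨fun j => pickF S hS c j (usedF S hS c j), fun j => ?_⟩
  have himg : ∀ j : ℕ,
      (Finset.range j).image (fun i => pickF S hS c i (usedF S hS c i)) =
        usedF S hS c j := by
    intro j
    induction j with
    | zero => simp [usedF]
    | succ n ih =>
      rw [Finset.range_add_one, Finset.image_insert, ih]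
      rfl
  rw [himg j]
  exact pickF_spec S hS c j (usedF S hS c j)
end
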